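/- Define b⟨t₁,t₂⟩ by the decomposition ((y₁+y₂+μ₁x₂+μ₃)/(x₂-x₁) - 1/t₁ + 1/t₂)·ω₁⟨t₁⟩ = (element of ℤ[μ⃗][[t₁,t₂]])·ω₁⟨t₁⟩ + b⟨t₁,t₂⟩ dt₁/(t₂-t₁) with b⟨t₁,t₂⟩ ∈ ℤ[μ⃗][[t₁,t₂]]. Then b⟨t₁,t₁⟩ = 1, i.e., b⟨t₁,t₂⟩ ∈ 1 + (t₂-t₁)·ℤ[μ⃗][[t₁,t₂]]. -/

import Mathlib

noncomputable section

/-- The coefficient ring `ℤ[μ₁,μ₂,μ₃,μ₄,μ₆]`. -/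
abbrev CoefRing : Type := MvPolynomial (Fin 5) ℤ

def μ1 : CoefRing := MvPolynomial.X 0
def μ2 : CoefRing := MvPolynomial.X 1
def μ3 : CoefRing := MvPolynomial.X 2
def μ4 : CoefRing := MvPolynomial.X 3
def μ6 : CoefRing := MvPolynomial.X 4

open PowerSeries in
/-- The functional equation `s = (1 + μ₂s + μ₄s² + μ₆s³)t² + (μ₁s + μ₃s²)t`
satisfied by `s = 1/x` in the arithmetic parameter `t = -x/y` of the curve
`y² + (μ₁x+μ₃)y = x³ + μ₂x² + μ₄x + μ₆`. -/
def SFunEq (s : PowerSeries CoefRing) : Prop :=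
  s = (1 + C μ2 * s + C μ4 * s ^ 2 + C μ6 * s ^ 3) * X ^ 2
      + (C μ1 * s + C μ3 * s ^ 2) * X

/-- Embedding of power series into formal Laurent series. -/
abbrev toL : PowerSeries CoefRing →+* LaurentSeries CoefRing :=
  HahnSeries.ofPowerSeries ℤ CoefRing

/-- The Laurent series `t`. -/
def tL : LaurentSeries CoefRing := HahnSeries.single (1 : ℤ) (1 : CoefRing)

/-- Constant Laurent series. -/
abbrev CL : CoefRing →+* LaurentSeries CoefRing := HahnSeries.C

/-- `IsXY s x y` says: `s` is the canonical solution of the functional equation,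
`x = 1/s` (the expansion `x⟨t⟩` of the `x`-coordinate) and `y = -x/t`
(the expansion `y⟨t⟩` of the `y`-coordinate). -/
structure IsXY (s : PowerSeries CoefRing)
    (x y : LaurentSeries CoefRing) : Prop where
  s0 : PowerSeries.constantCoeff s = 0
  seq : SFunEq s
  hx : x * toL s = 1
  hy : y * tL = -x

/-- The two-variable power series ring `ℤ[μ⃗][[t₁,t₂]] = (ℤ[μ⃗][[t₁]])[[t₂]]`:
the inner variable is `t₁`, the outer one is `t₂`. -/
abbrev PS2 : Type := PowerSeries (PowerSeries CoefRing)

/-- `t₁` as an element of `ℤ[μ⃗][[t₁,t₂]]`. -/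
def T1 : PS2 := PowerSeries.C PowerSeries.X
/-- `t₂` as an element of `ℤ[μ⃗][[t₁,t₂]]`. -/
def T2 : PS2 := PowerSeries.X
/-- A series `f(t)` regarded as `f(t₁)`. -/
def inT1 (f : PowerSeries CoefRing) : PS2 := PowerSeries.C f
/-- A series `f(t)` regarded as `f(t₂)`. -/
def inT2 (f : PowerSeries CoefRing) : PS2 := PowerSeries.map (PowerSeries.C (R := CoefRing)) f
/-- The coefficient of `t₁^i t₂^j`. -/
def coeff2 (i j : ℕ) (f : PS2) : CoefRing :=
  PowerSeries.coeff i (PowerSeries.coeff j f)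

/-- The field of fractions of `ℤ[μ⃗][[t₁,t₂]]`, in which `x⟨tᵢ⟩`, `y⟨tᵢ⟩`,
`1/tᵢ`, `1/(t₁-t₂)` all make sense. -/
abbrev K2 : Type := FractionRing PS2

/-- The canonical embedding `ℤ[μ⃗][[t₁,t₂]] → K2`. -/
def ι : PS2 →+* K2 := algebraMap PS2 K2

/-- A constant `a ∈ ℤ[μ⃗]` as an element of `K2`. -/
def Cι (a : CoefRing) : K2 :=
  ι (PowerSeries.C (PowerSeries.C a))

/-- Evaluation of `b(t₁,t₂)` on the diagonal `t₂ = t₁`. -/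
def diagEval (b : PS2) : PowerSeries CoefRing :=
  PowerSeries.mk fun n => ∑ k ∈ Finset.range (n + 1),
    PowerSeries.coeff (n - k) (PowerSeries.coeff k b)


open PowerSeries in
lemma coeff_diagEval (f : PS2) (n : ℕ) :
    PowerSeries.coeff n (diagEval f) = ∑ k ∈ Finset.range (n+1),
      PowerSeries.coeff (n-k) (PowerSeries.coeff k f) :=
  coeff_mk _ _

open PowerSeries in
def Lg (f : PS2) : PS2 := mk fun j => mk fun m =>
  ∑ k ∈ Finset.range (m+1),
    PowerSeries.coeff (m-k) (PowerSeries.coeff (j+1+k) f)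

open PowerSeries in
lemma sumshift (g : ℕ → PowerSeries CoefRing) (m : ℕ) :
    ∑ k ∈ Finset.range (m+2), coeff (m+1-k) (g k)
      = (∑ k ∈ Finset.range (m+1), coeff (m-k) (g (k+1)))
        + coeff (m+1) (g 0) := by
  rw [Finset.sum_range_succ']
  congr 1
  exact Finset.sum_congr rfl fun i _ => by rw [show m+1-(i+1) = m-i by omega]

open PowerSeries in
lemma Ldec (f : PS2) : f = inT1 (diagEval f) + (T2 - T1) * Lg f := by
  have hTT : (T2 - T1) * Lg f = X * Lg f - C X * Lg f := by
    rw [T1, T2, sub_mul]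
  ext j : 1
  rw [map_add, hTT, map_sub, inT1]
  cases j with
  | zero =>
    rw [coeff_zero_X_mul, coeff_C_mul, coeff_zero_C]
    ext m : 1
    cases m with
    | zero =>
      rw [map_add, map_sub, LinearMap.map_zero, coeff_zero_X_mul, coeff_diagEval]
      simp
    | succ m =>
      rw [map_add, map_sub, LinearMap.map_zero, coeff_succ_X_mul, coeff_diagEval,
        Lg, coeff_mk, coeff_mk, show m+1+1 = m+2 from rfl, sumshift (fun k => coeff k f)]
      have e1 : (∑ k ∈ Finset.range (m+1),
          coeff (m-k) (coeff (k+1) f))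
          = ∑ k ∈ Finset.range (m+1),
          coeff (m-k) (coeff (0+1+k) f) :=
        Finset.sum_congr rfl fun i _ => by rw [show 0+1+i = i+1 by omega]
      rw [e1]
      ring
  | succ j =>
    rw [coeff_succ_X_mul, coeff_C_mul, coeff_C, if_neg (Nat.succ_ne_zero j)]
    ext m : 1
    cases m with
    | zero =>
      simp [Lg]
    | succ m =>
      rw [zero_add, map_sub, coeff_succ_X_mul, Lg, coeff_mk, coeff_mk, coeff_mk, coeff_mk,
        show m+1+1 = m+2 from rfl, sumshift (fun k => coeff (j+1+k) f)]
      have e1 : (∑ k ∈ Finset.range (m+1),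
          coeff (m-k) (coeff (j+1+(k+1)) f))
          = ∑ k ∈ Finset.range (m+1),
          coeff (m-k) (coeff (j+1+1+k) f) :=
        Finset.sum_congr rfl fun i _ => by rw [show j+1+(i+1) = j+1+1+i by omega]
      rw [e1, show j+1+0 = j+1 by omega]
      ring

open PowerSeries in
lemma key_inj (g : PowerSeries CoefRing) (h : PS2)
    (hg : (PowerSeries.C g : PS2) = (T2 - T1) * h) : g = 0 := by
  have hTT : (T2 - T1) * h = X * h - C X * h := by
    rw [T1, T2, sub_mul]
  rw [hTT] at hg
  have h0 : g = -(X * coeff 0 h) := by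
    have := congrArg (coeff 0) hg
    rwa [coeff_zero_C, map_sub, coeff_zero_X_mul, coeff_C_mul, zero_sub] at this
  have hrec : ∀ j, coeff j h
      = X * coeff (j+1) h := by
    intro j
    have := congrArg (coeff (j+1)) hg
    rw [coeff_C, if_neg (Nat.succ_ne_zero j), map_sub, coeff_succ_X_mul, coeff_C_mul] at this
    exact eq_of_sub_eq_zero this.symm
  have hpow : ∀ m, coeff 0 h
      = X ^ m * coeff m h := by
    intro m
    induction m with
    | zero => simp
    | succ m ih => rw [ih, hrec m, pow_succ]; ring
  ext m : 1
  rw [h0, hpow m, map_zero, LinearMap.map_neg, neg_eq_zero, ← mul_assoc, ← pow_succ',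
    mul_comm, coeff_mul_X_pow', if_neg (by omega)]

lemma inT1_eq (f : PowerSeries CoefRing) :
    inT1 f = PowerSeries.C f := rfl

open PowerSeries in
lemma diag_inT1 (f : PowerSeries CoefRing) : diagEval (inT1 f) = f := by
  ext n : 1
  rw [coeff_diagEval]
  have h : ∀ k ∈ Finset.range (n+1),
      coeff (n-k) (coeff k (inT1 f))
        = if k = 0 then coeff n f else 0 := by
    intro k hk
    rw [inT1_eq, PowerSeries.coeff_C]
    by_cases h : k = 0
    · subst h; simp
    · rw [if_neg h, if_neg h, map_zero]
  rw [Finset.sum_congr rfl h, Finset.sum_ite_eq' (Finset.range (n+1)) 0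
    (fun _ => coeff n f), if_pos (by simp)]

open PowerSeries in
lemma diag_inT2 (f : PowerSeries CoefRing) : diagEval (inT2 f) = f := by
  ext n : 1
  rw [coeff_diagEval]
  have h : ∀ k ∈ Finset.range (n+1),
      coeff (n-k) (coeff k (inT2 f))
        = if k = n then coeff n f else 0 := by
    intro k hk
    rw [Finset.mem_range] at hk
    rw [inT2, PowerSeries.coeff_map, PowerSeries.coeff_C]
    by_cases h : k = n
    · subst h; simp
    · rw [if_neg (by omega), if_neg h]
  rw [Finset.sum_congr rfl h, Finset.sum_ite_eq' (Finset.range (n+1)) n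
    (fun _ => coeff n f), if_pos (by simp)]

lemma diag_one : diagEval 1 = 1 := by
  have := diag_inT1 1
  rwa [inT1_eq, map_one] at this

open PowerSeries in
lemma diag_add (f g : PS2) : diagEval (f + g) = diagEval f + diagEval g := by
  ext n : 1
  simp [coeff_diagEval, Finset.sum_add_distrib]

open PowerSeries in
lemma diag_sub (f g : PS2) : diagEval (f - g) = diagEval f - diagEval g := by
  ext n : 1
  simp [coeff_diagEval, Finset.sum_sub_distrib]

open PowerSeries in
lemma diag_mul (f g : PS2) : diagEval (f * g) = diagEval f * diagEval g := by
  have h1' : (PowerSeries.C (diagEval f) : PS2)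
      = f - (T2 - T1) * Lg f := by
    have := Ldec f; rw [inT1_eq] at this; linear_combination -this
  have h2' : (PowerSeries.C (diagEval g) : PS2)
      = g - (T2 - T1) * Lg g := by
    have := Ldec g; rw [inT1_eq] at this; linear_combination -this
  have h3' : (PowerSeries.C (diagEval (f * g)) : PS2)
      = f * g - (T2 - T1) * Lg (f * g) := by
    have := Ldec (f * g); rw [inT1_eq] at this; linear_combination -this
  have key : (PowerSeries.C
      (diagEval (f * g) - diagEval f * diagEval g) : PS2)
      = (T2 - T1) * (f * Lg g + Lg f * g - (T2 - T1) * (Lg f * Lg g) - Lg (f * g)) := by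
    rw [map_sub, map_mul, h1', h2', h3']
    ring
  exact sub_eq_zero.mp (key_inj _ _ key)

lemma diag_T1 : diagEval T1 = PowerSeries.X := diag_inT1 PowerSeries.X

lemma diag_T2 : diagEval T2 = PowerSeries.X := by
  have : T2 = inT2 PowerSeries.X := by
    rw [inT2, PowerSeries.map_X]; rfl
  rw [this, diag_inT2]

/-- the divided difference `(s(t₁)-s(t₂))/(t₁-t₂)` -/
def cdiv (s : PowerSeries CoefRing) : PS2 :=
  PowerSeries.mk fun j => PowerSeries.mk fun m => PowerSeries.coeff (m+j+1) s

open PowerSeries in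
lemma cdiv_spec (s : PowerSeries CoefRing) :
    inT1 s - inT2 s = (T1 - T2) * cdiv s := by
  have hTT : (T1 - T2) * cdiv s
      = C X * cdiv s - X * cdiv s := by
    rw [T1, T2, sub_mul]
  rw [hTT]
  ext j : 1
  rw [map_sub, map_sub, coeff_C_mul, inT1_eq, inT2, coeff_map, coeff_C]
  cases j with
  | zero =>
    rw [coeff_zero_X_mul, if_pos rfl, sub_zero]
    ext m : 1
    cases m with
    | zero => simp [cdiv]
    | succ m =>
      simp [cdiv, coeff_succ_X_mul, PowerSeries.coeff_C]
  | succ j =>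
    rw [if_neg (Nat.succ_ne_zero j), coeff_succ_X_mul, zero_sub]
    ext m : 1
    cases m with
    | zero =>
      simp only [cdiv, map_sub, map_neg, coeff_zero_X_mul, coeff_mk, coeff_zero_C, zero_sub,
        neg_inj]
      rw [show 0+j+1 = j+1 by omega]
    | succ m =>
      simp only [cdiv, map_sub, map_neg, coeff_succ_X_mul, coeff_mk, coeff_C,
        if_neg (Nat.succ_ne_zero m), neg_zero]
      rw [show m+(j+1)+1 = m+1+j+1 by omega, sub_self]

open PowerSeries in
lemma coeff_derivativeFun' (f : PowerSeries CoefRing) (n : ℕ) :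
    coeff n f.derivativeFun = coeff (n+1) f * (n+1) :=
  coeff_derivative f n

open PowerSeries in
lemma diag_cdiv (s : PowerSeries CoefRing) :
    diagEval (cdiv s) = s.derivativeFun := by
  ext n : 1
  rw [coeff_diagEval, coeff_derivativeFun']
  have h : ∀ k ∈ Finset.range (n+1),
      coeff (n-k) (coeff k (cdiv s))
        = coeff (n+1) s := by
    intro k hk
    rw [Finset.mem_range] at hk
    rw [cdiv, coeff_mk, coeff_mk, show n-k+k+1 = n+1 by omega]
  rw [Finset.sum_congr rfl h, Finset.sum_const, Finset.card_range, nsmul_eq_mul, mul_comm]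
  norm_cast

open PowerSeries in
lemma s_coeff_one (s : PowerSeries CoefRing)
    (hs0 : PowerSeries.constantCoeff s = 0) (hseq : SFunEq s) :
    PowerSeries.coeff 1 s = 0 := by
  have h := congrArg (coeff 1) hseq
  rw [map_add, coeff_mul_X_pow', show (X : (CoefRing)⟦X⟧) = X^1 by ring,
    coeff_mul_X_pow', if_neg (by omega), if_pos (by omega)] at h
  simpa [hs0] using h

open PowerSeries in
lemma s_coeff_two (s : PowerSeries CoefRing)
    (hs0 : PowerSeries.constantCoeff s = 0) (hseq : SFunEq s) :
    PowerSeries.coeff 2 s = 1 := by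
  have h := congrArg (coeff 2) hseq
  rw [map_add, coeff_mul_X_pow', show (X : (CoefRing)⟦X⟧) = X^1 by ring,
    coeff_mul_X_pow', if_pos (by omega), if_pos (by omega)] at h
  have hsq : coeff 1 (s^2) = 0 := by
    rw [pow_two, coeff_mul, Finset.Nat.sum_antidiagonal_eq_sum_range_succ_mk]
    simp [Finset.sum_range_succ, coeff_zero_eq_constantCoeff, hs0, s_coeff_one s hs0 hseq]
  simpa [hs0, hsq, s_coeff_one s hs0 hseq] using h

open PowerSeries in
lemma s_ne (s : PowerSeries CoefRing)
    (hs0 : PowerSeries.constantCoeff s = 0) (hseq : SFunEq s) :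
    s ≠ 0 := by
  intro h
  have := s_coeff_two s hs0 hseq
  rw [h, map_zero] at this
  exact one_ne_zero this.symm

open PowerSeries in
lemma ds_ne (s : PowerSeries CoefRing)
    (hs0 : PowerSeries.constantCoeff s = 0) (hseq : SFunEq s) :
    s.derivativeFun ≠ 0 := by
  intro h
  have := congrArg (coeff 1) h
  rw [coeff_derivativeFun', s_coeff_two s hs0 hseq, map_zero, one_mul] at this
  norm_num at this


lemma diag_zero : diagEval 0 = 0 := by
  have := diag_inT1 0; rwa [inT1_eq, map_zero] at this

lemma diag_two : diagEval 2 = 2 := by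
  have := diag_inT1 2; rwa [inT1_eq, map_ofNat] at this

lemma diag_neg (f : PS2) : diagEval (-f) = -diagEval f := by
  have := diag_sub 0 f; rwa [zero_sub, diag_zero, zero_sub] at this

lemma Cι_eq (a : CoefRing) : Cι a = ι (inT1 (PowerSeries.C a)) := rfl


set_option maxHeartbeats 2000000 in
set_option synthInstance.maxHeartbeats 1000000 in
open PowerSeries in
/-- For any decomposition
`((y₁+y₂+μ₁x₂+μ₃)/(x₂-x₁) - 1/t₁ + 1/t₂)·ω₁⟨t₁⟩/dt₁ = E + b/(t₂-t₁)` with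
`E, b ∈ ℤ[μ⃗][[t₁,t₂]]` (the term `E` being the one absorbed into
`ℤ[μ⃗][[t₁,t₂]]·ω₁⟨t₁⟩`, rewritten here with `ω₁⟨t₁⟩/dt₁` a unit of
`1 + t₁ℤ[μ⃗][[t₁]]`), one has `b⟨t₁,t₁⟩ = 1`, i.e.
`b ∈ 1 + (t₂-t₁)·ℤ[μ⃗][[t₁,t₂]]`. -/
theorem statement9 (s : PowerSeries CoefRing)
    (hs0 : PowerSeries.constantCoeff s = 0) (hseq : SFunEq s)
    (E b : PS2)
    (hdec :
      let X1 : K2 := (ι (inT1 s))⁻¹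
      let X2 : K2 := (ι (inT2 s))⁻¹
      let Y1 : K2 := -X1 / ι T1
      let Y2 : K2 := -X2 / ι T2
      let W1 : K2 := (-(ι (inT1 s.derivativeFun)) * X1 ^ 2) /
        (2 * Y1 + Cι μ1 * X1 + Cι μ3)
      ((Y1 + Y2 + Cι μ1 * X2 + Cι μ3) / (X2 - X1) - (ι T1)⁻¹ + (ι T2)⁻¹) * W1
        = ι E * W1 + ι b / (ι T2 - ι T1)) :
    diagEval b = 1 ∧ ∃ g : PS2, b = 1 + (T2 - T1) * g := by
  have hs := s_ne s hs0 hseq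
  have hds := ds_ne s hs0 hseq
  have hinj : Function.Injective ι := IsFractionRing.injective PS2 K2
  -- nonzero facts in PS2
  have hT1 : (T1 : PS2) ≠ 0 := fun h => by
    have := congrArg (PowerSeries.coeff 0) h
    rw [T1, coeff_zero_C, map_zero] at this
    exact X_ne_zero this
  have hT2 : (T2 : PS2) ≠ 0 := X_ne_zero
  have hS1 : inT1 s ≠ 0 := fun h => by
    have := congrArg (PowerSeries.coeff 0) h
    rw [inT1_eq, coeff_zero_C, map_zero] at this
    exact hs this
  have hS2 : inT2 s ≠ 0 := fun h => by
    have := diag_inT2 s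
    rw [h, diag_zero] at this
    exact hs this.symm
  have hS12 : inT1 s ≠ inT2 s := fun h => by
    have := congrArg (PowerSeries.coeff 0) h
    rw [inT1_eq, coeff_zero_C, inT2, coeff_map, coeff_zero_eq_constantCoeff, hs0,
      map_zero] at this
    exact hs this
  have hT21 : (T2 : PS2) - T1 ≠ 0 := sub_ne_zero.mpr fun h => by
    have := congrArg (PowerSeries.coeff 1) h
    rw [T1, T2, coeff_C, if_neg one_ne_zero, coeff_X, if_pos rfl] at this
    exact one_ne_zero this
  have hD1 : inT1 s.derivativeFun ≠ 0 := fun h => by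
    have := congrArg (PowerSeries.coeff 0) h
    rw [inT1_eq, coeff_zero_C, map_zero] at this
    exact hds this
  -- the `q` series and its nonvanishing
  set q : PowerSeries CoefRing :=
    s * (2 - PowerSeries.C μ1 * X - PowerSeries.C μ3 * s * X) with hqdef
  have hq : q ≠ 0 := by
    refine mul_ne_zero hs fun h => ?_
    have := congrArg (constantCoeff) h
    simp only [map_sub, map_mul, map_ofNat, constantCoeff_X, mul_zero, sub_zero,
      map_zero] at this
    exact two_ne_zero this
  -- main identity in PS2
  have hPS : b * (inT1 s - inT2 s) * T1 * T2
        * (inT1 s * (2 - inT1 (PowerSeries.C μ1) * T1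
            - inT1 (PowerSeries.C μ3) * inT1 s * T1))
      = (T2 - T1) * ((-(inT2 s) * T2 - inT1 s * T1
            + inT1 (PowerSeries.C μ1) * inT1 s * T1 * T2
            + inT1 (PowerSeries.C μ3) * inT1 s * inT2 s * T1 * T2)
          + (T1 - T2) * (inT1 s - inT2 s) - E * (inT1 s - inT2 s) * T1 * T2)
        * (inT1 s.derivativeFun * T1) := by
    have ha1 : ι (inT1 s) ≠ 0 := (map_ne_zero_iff ι hinj).mpr hS1
    have ha2 : ι (inT2 s) ≠ 0 := (map_ne_zero_iff ι hinj).mpr hS2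
    have hu1 : ι T1 ≠ 0 := (map_ne_zero_iff ι hinj).mpr hT1
    have hu2 : ι T2 ≠ 0 := (map_ne_zero_iff ι hinj).mpr hT2
    have hu21 : ι T2 - ι T1 ≠ 0 := by
      rw [← map_sub]; exact (map_ne_zero_iff ι hinj).mpr hT21
    have ha12 : ι (inT1 s) ≠ ι (inT2 s) := fun h => hS12 (hinj h)
    have hXX : (ι (inT2 s))⁻¹ - (ι (inT1 s))⁻¹ ≠ 0 :=
      sub_ne_zero.mpr fun h => ha12 (inv_injective h).symm
    have hw2 : (-2 : PS2) + inT1 (PowerSeries.C μ1) * T1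
        + inT1 (PowerSeries.C μ3) * inT1 s * T1 ≠ 0 := fun h => by
      have h1 := congrArg (PowerSeries.constantCoeff) h
      simp only [map_add, map_mul, map_neg, map_ofNat, map_zero, T1, inT1_eq,
        constantCoeff_C] at h1
      have h2 := congrArg (constantCoeff) h1
      simp only [map_add, map_mul, map_neg, map_ofNat, map_zero, constantCoeff_C,
        constantCoeff_X, mul_zero, add_zero] at h2
      exact two_ne_zero (neg_eq_zero.mp h2)
    have hDD : 2 * (-(ι (inT1 s))⁻¹ / ι T1) + Cι μ1 * (ι (inT1 s))⁻¹ + Cι μ3 ≠ 0 := by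
      have hrw : 2 * (-(ι (inT1 s))⁻¹ / ι T1) + Cι μ1 * (ι (inT1 s))⁻¹ + Cι μ3
          = ι ((-2 : PS2) + inT1 (PowerSeries.C μ1) * T1
              + inT1 (PowerSeries.C μ3) * inT1 s * T1) / (ι (inT1 s) * ι T1) := by
        rw [Cι_eq, Cι_eq, map_add, map_add, map_mul, map_mul, map_mul, map_neg, map_ofNat]
        field_simp
      rw [hrw]
      exact div_ne_zero ((map_ne_zero_iff ι hinj).mpr hw2) (mul_ne_zero ha1 hu1)
    have ha12' : ι (inT1 s) - ι (inT2 s) ≠ 0 := sub_ne_zero.mpr ha12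
    have hB : -(2 * ι (inT1 s)) + Cι μ1 * (ι (inT1 s) * ι T1)
        + Cι μ3 * (ι (inT1 s) * ι T1 * ι (inT1 s)) ≠ 0 := by
      have hrw : -(2 * ι (inT1 s)) + Cι μ1 * (ι (inT1 s) * ι T1)
          + Cι μ3 * (ι (inT1 s) * ι T1 * ι (inT1 s))
          = ι (inT1 s) * ι ((-2 : PS2) + inT1 (PowerSeries.C μ1) * T1
              + inT1 (PowerSeries.C μ3) * inT1 s * T1) := by
        rw [Cι_eq, Cι_eq, map_add, map_add, map_mul, map_mul, map_mul, map_neg, map_ofNat]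
        ring
      rw [hrw]
      exact mul_ne_zero ha1 ((map_ne_zero_iff ι hinj).mpr hw2)
    have h0 := hdec
    simp only [] at h0
    field_simp [ha1, ha2, hu1, hu2, hu21, hXX, hDD, ha12', hB] at h0
    have hDEN : ι (inT1 s) * ι T1 * (ι (inT2 s) * ι T2) * ι (inT2 s)
        * (ι (inT1 s) - ι (inT2 s)) ≠ 0 :=
      mul_ne_zero (mul_ne_zero (mul_ne_zero (mul_ne_zero ha1 hu1)
        (mul_ne_zero ha2 hu2)) ha2) ha12'
    have hwv := div_mul_cancel₀ (((-(ι (inT2 s) * ι T2) + -(ι (inT1 s) * ι T1)) * ι (inT2 s)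
        + Cι μ1 * (ι (inT1 s) * ι T1 * (ι (inT2 s) * ι T2))
        + Cι μ3 * (ι (inT1 s) * ι T1 * (ι (inT2 s) * ι T2) * ι (inT2 s)))
        * (ι (inT2 s) * ι (inT1 s)) * ι T1) hDEN
    have hM : T1 * T2 * inT1 s ^ 6 * inT2 s ^ 2
        * ((-2 : PS2) + inT1 (PowerSeries.C μ1) * T1
            + inT1 (PowerSeries.C μ3) * inT1 s * T1) ≠ 0 :=
      mul_ne_zero (mul_ne_zero (mul_ne_zero (mul_ne_zero hT1 hT2)
        (pow_ne_zero 6 hS1)) (pow_ne_zero 2 hS2)) hw2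
    refine mul_left_cancel₀ hM ?_
    apply hinj
    simp only [map_mul, map_sub, map_add, map_neg, map_ofNat, map_pow, ← Cι_eq]
    have hW : (-2 + ι T1 * Cι μ1 + ι (inT1 s) * ι T1 * Cι μ3 : K2) ≠ 0 := by
      have := (map_ne_zero_iff ι hinj).mpr hw2
      simp only [map_add, map_mul, map_neg, map_ofNat, ← Cι_eq] at this
      convert this using 1
      ring
    have e1 := div_mul_cancel₀ ((-(ι (inT2 s) * ι T2) + -(ι (inT1 s) * ι T1)
        + ι (inT1 s) * ι T1 * ι T2 * Cι μ1 + ι (inT1 s) * ι T1 * ι (inT2 s) * ι T2 * Cι μ3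
        - ι T2 * (ι (inT1 s) - ι (inT2 s)) + ι T1 * (ι (inT1 s) - ι (inT2 s)))
        * ι (inT1 s.derivativeFun) * (ι T2 - ι T1)) hW
    have e2 := div_mul_cancel₀ (ι T1 * ι (inT1 s.derivativeFun) * ι E * (ι T2 - ι T1)) hW
    have h0' : -((-(ι (inT2 s) * ι T2) + -(ι (inT1 s) * ι T1)
        + ι (inT1 s) * ι T1 * ι T2 * Cι μ1 + ι (inT1 s) * ι T1 * ι (inT2 s) * ι T2 * Cι μ3
        - ι T2 * (ι (inT1 s) - ι (inT2 s)) + ι T1 * (ι (inT1 s) - ι (inT2 s)))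
        * ι (inT1 s.derivativeFun) * (ι T2 - ι T1))
        = ι T2 * (ι (inT1 s) - ι (inT2 s)) * (-(ι T1 * ι (inT1 s.derivativeFun) * ι E * (ι T2 - ι T1))
          + ι (inT1 s) * ι b * (-2 + ι T1 * Cι μ1 + ι (inT1 s) * ι T1 * Cι μ3)) := by
      linear_combination (-2 + ι T1 * Cι μ1 + ι (inT1 s) * ι T1 * Cι μ3) * h0 + e1
        - ι T2 * (ι (inT1 s) - ι (inT2 s)) * e2
    linear_combination (ι T1 * ι T2 * ι (inT1 s) ^ 6 * ι (inT2 s) ^ 2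
      * (-2 + ι T1 * Cι μ1 + ι (inT1 s) * ι T1 * Cι μ3) * ι T1) * h0'
  -- cancel (T2 - T1)
  rw [cdiv_spec s] at hPS
  have hcan : -(b * cdiv s * T1 * T2
        * (inT1 s * (2 - inT1 (PowerSeries.C μ1) * T1
            - inT1 (PowerSeries.C μ3) * inT1 s * T1)))
      - ((-(inT2 s) * T2 - inT1 s * T1
            + inT1 (PowerSeries.C μ1) * inT1 s * T1 * T2
            + inT1 (PowerSeries.C μ3) * inT1 s * inT2 s * T1 * T2)
          + (T1 - T2) * ((T1 - T2) * cdiv s) - E * ((T1 - T2) * cdiv s) * T1 * T2)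
        * (inT1 s.derivativeFun * T1) = 0 := by
    apply mul_left_cancel₀ hT21
    rw [mul_zero]
    linear_combination hPS
  -- apply the diagonal evaluation
  have hd := congrArg diagEval hcan
  simp only [diag_mul, diag_sub, diag_add, diag_neg, diag_two, diag_T1, diag_T2,
    diag_inT1, diag_inT2, diag_cdiv, diag_zero] at hd
  have hfac : (diagEval b - 1) * (s.derivativeFun * X ^ 2 * q) = 0 := by
    rw [hqdef]
    linear_combination -hd
  have hqq : s.derivativeFun * X ^ 2 * q ≠ 0 :=
    mul_ne_zero (mul_ne_zero hds (pow_ne_zero 2 X_ne_zero)) hq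
  have hb1 : diagEval b = 1 := by
    rcases mul_eq_zero.mp hfac with h | h
    · exact sub_eq_zero.mp h
    · exact absurd h hqq
  refine ⟨hb1, Lg b, ?_⟩
  have := Ldec b
  rwa [hb1, inT1_eq, map_one] at this
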